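/- Let f ∈ ℤ[x] be a polynomial of degree d ≥ 2 with leading coefficient f_d, without rational integer roots. Set D = d|f_d| + 1. Then there exists N_0 such that for all N ≥ N_0, every prime p > DN and every k with 1 ≤ k ≤ d−1, at most d−k of the values f(1), f(2), ..., f(N) are divisible by p^k. -/

import Mathlib

open Polynomial Finset
set_option maxHeartbeats 1600000




variable {m : ℕ}

/-- Complete homogeneous-ish sum over `piAntidiag`. -/
def Hf (x : Fin (m+1) → ℤ) (j : ℕ) : ℤ :=
  ∑ k ∈ Finset.piAntidiag Finset.univ j, ∏ i, x i ^ k i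

lemma Hf_nonneg (x : Fin (m+1) → ℤ) (hx : ∀ i, 0 ≤ x i) (j : ℕ) : 0 ≤ Hf x j := by
  apply Finset.sum_nonneg
  intro k _
  exact Finset.prod_nonneg fun i _ => pow_nonneg (hx i) _

lemma Hf_ge (x : Fin (m+1) → ℤ) (hx : ∀ i, 0 ≤ x i) (j : ℕ) (i0 : Fin (m+1)) :
    x i0 ^ j ≤ Hf x j := by
  have hmem : (Pi.single i0 j : Fin (m+1) → ℕ) ∈ Finset.piAntidiag Finset.univ j := by
    rw [Finset.mem_piAntidiag]
    refine ⟨?_, fun i _ => Finset.mem_univ i⟩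
    simp
  have : ∏ i, x i ^ (Pi.single i0 j : Fin (m+1) → ℕ) i = x i0 ^ j := by
    rw [Finset.prod_eq_single i0]
    · simp
    · intro b _ hb; simp [Pi.single_eq_of_ne hb]
    · simp
  calc x i0 ^ j = _ := this.symm
    _ ≤ Hf x j := Finset.single_le_sum (f := fun k => ∏ i, x i ^ k i)
        (fun k _ => Finset.prod_nonneg fun i _ => pow_nonneg (hx i) _) hmem

lemma Hf_le (x : Fin (m+1) → ℤ) (M : ℤ) (hx0 : ∀ i, 0 ≤ x i) (hx : ∀ i, x i ≤ M) (j : ℕ) :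
    Hf x j ≤ ((m+1) * M) ^ j := by
  have hM : 0 ≤ M := le_trans (hx0 0) (hx 0)
  have h1 : Hf x j ≤ ∑ k ∈ Finset.piAntidiag Finset.univ j,
      (Nat.multinomial Finset.univ k : ℤ) * ∏ i, x i ^ k i := by
    apply Finset.sum_le_sum
    intro k _
    have hprod : 0 ≤ ∏ i, x i ^ k i := Finset.prod_nonneg fun i _ => pow_nonneg (hx0 i) _
    nlinarith [Nat.one_le_iff_ne_zero.2 (Nat.multinomial_pos Finset.univ k).ne',
      (Nat.one_le_cast (α := ℤ)).2 (Nat.one_le_iff_ne_zero.2 (Nat.multinomial_pos Finset.univ k).ne')]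
  rw [Hf]
  refine le_trans h1 ?_
  rw [← Finset.sum_pow_eq_sum_piAntidiag Finset.univ x j]
  calc (∑ i, x i) ^ j ≤ ((m+1) * M) ^ j := by
        apply pow_le_pow_left₀
        · exact Finset.sum_nonneg fun i _ => hx0 i
        · calc ∑ i, x i ≤ ∑ _i : Fin (m+1), M := Finset.sum_le_sum fun i _ => hx i
            _ = (m+1) * M := by simp [mul_comm]


lemma sum_finsuppAntidiag_eq {ι : Type*} [DecidableEq ι] (s : Finset ι) (n : ℕ)
    (g : (ι → ℕ) → ℚ) :
    ∑ l ∈ Finset.finsuppAntidiag s n, g l = ∑ k ∈ Finset.piAntidiag s n, g k := by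
  rw [Finset.finsuppAntidiag, Finset.sum_map]
  change ∑ x ∈ (s.piAntidiag n).attach, g (x : ι → ℕ) = _
  rw [Finset.sum_attach]

lemma geom_mul (a : ℚ) :
    (1 - PowerSeries.C a * PowerSeries.X) * PowerSeries.mk (fun n => a ^ n) = 1 := by
  ext n
  rw [sub_mul, one_mul, map_sub]
  cases n with
  | zero => simp
  | succ n =>
    rw [mul_assoc, PowerSeries.coeff_C_mul, PowerSeries.coeff_succ_X_mul]
    simp [pow_succ, mul_comm]

lemma poly_identity {m : ℕ} (c : Fin (m+1) → ℚ) (hinj : Function.Injective c)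
    (h0 : ∀ i, c i ≠ 0) :
    ∑ i, Polynomial.C ((∏ j ∈ Finset.univ.erase i, (c i - c j))⁻¹) *
        ∏ j ∈ Finset.univ.erase i, (1 - Polynomial.C (c j) * Polynomial.X)
      = (Polynomial.X : ℚ[X]) ^ m := by
  have hcard : ∀ i : Fin (m+1), (Finset.univ.erase i).card = m := by
    intro i
    rw [Finset.card_erase_of_mem (Finset.mem_univ i), Finset.card_univ, Fintype.card_fin]
    omega
  rw [← sub_eq_zero]
  apply Polynomial.eq_zero_of_natDegree_lt_card_of_eval_eq_zero _
    (f := fun i : Fin (m+1) => (c i)⁻¹) (fun a b hab => hinj (inv_injective hab))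
  · intro i
    rw [Polynomial.eval_sub, Polynomial.eval_finset_sum, Polynomial.eval_pow, Polynomial.eval_X]
    rw [Finset.sum_eq_single i]
    · have hfac : ∀ j ∈ Finset.univ.erase i, (1 - Polynomial.C (c j) * Polynomial.X).eval (c i)⁻¹
          = (c i - c j) * (c i)⁻¹ := by
        intro j _
        rw [Polynomial.eval_sub, Polynomial.eval_one, Polynomial.eval_mul, Polynomial.eval_C,
          Polynomial.eval_X, sub_mul, mul_inv_cancel₀ (h0 i)]
      rw [Polynomial.eval_mul, Polynomial.eval_C, Polynomial.eval_prod,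
        Finset.prod_congr rfl hfac, Finset.prod_mul_distrib, Finset.prod_const, hcard i]
      have hne : (∏ j ∈ Finset.univ.erase i, (c i - c j)) ≠ 0 := by
        apply Finset.prod_ne_zero_iff.2
        intro j hj
        exact sub_ne_zero.2 fun h => (Finset.mem_erase.1 hj).1 (hinj h).symm
      rw [← mul_assoc, inv_mul_cancel₀ hne, one_mul, sub_self]
    · intro i' _ hi'
      rw [Polynomial.eval_mul, Polynomial.eval_prod]
      apply mul_eq_zero_of_right
      apply Finset.prod_eq_zero (Finset.mem_erase.2 ⟨Ne.symm hi', Finset.mem_univ i⟩)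
      rw [Polynomial.eval_sub, Polynomial.eval_one, Polynomial.eval_mul, Polynomial.eval_C,
        Polynomial.eval_X, mul_inv_cancel₀ (h0 i), sub_self]
    · exact fun h => absurd (Finset.mem_univ i) h
  · rw [Fintype.card_fin]
    have h1 : (∑ i, Polynomial.C ((∏ j ∈ Finset.univ.erase i, (c i - c j))⁻¹) *
        ∏ j ∈ Finset.univ.erase i, (1 - Polynomial.C (c j) * Polynomial.X)).natDegree ≤ m := by
      apply le_trans (Polynomial.natDegree_sum_le _ _)
      apply Finset.sup_le
      intro i _
      apply le_trans (Polynomial.natDegree_mul_le)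
      rw [Polynomial.natDegree_C, zero_add]
      apply le_trans (Polynomial.natDegree_prod_le _ _)
      calc ∑ j ∈ Finset.univ.erase i, (1 - Polynomial.C (c j) * Polynomial.X).natDegree
          ≤ ∑ j ∈ Finset.univ.erase i, 1 := by
            apply Finset.sum_le_sum
            intro j _
            refine le_trans (Polynomial.natDegree_sub_le _ _) (max_le (by simp) ?_)
            exact le_trans (Polynomial.natDegree_C_mul_le _ _) (by simp)
        _ = m := by rw [Finset.sum_const, smul_eq_mul, mul_one, hcard i]
    have h2 : ((Polynomial.X : ℚ[X]) ^ m).natDegree ≤ m := by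
      simp [Polynomial.natDegree_X_pow]
    exact lt_of_le_of_lt (Polynomial.natDegree_sub_le _ _)
      (max_lt (Nat.lt_succ_of_le h1) (Nat.lt_succ_of_le h2))
lemma key_identity {m : ℕ} (x : Fin (m+1) → ℤ) (hinj : Function.Injective x)
    (hpos : ∀ i, 1 ≤ x i) (n : ℕ) :
    ∑ i, (x i : ℚ) ^ n * (∏ j ∈ Finset.univ.erase i, ((x i : ℚ) - (x j : ℚ)))⁻¹
      = if m ≤ n then (Hf x (n - m) : ℚ) else 0 := by
  set c : Fin (m+1) → ℚ := fun i => (x i : ℚ) with hc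
  have cinj : Function.Injective c := fun a b hab => hinj (Int.cast_injective hab)
  have c0 : ∀ i, c i ≠ 0 := fun i => by
    have := hpos i; simp only [hc]; positivity
  set w : Fin (m+1) → ℚ := fun i => (∏ j ∈ Finset.univ.erase i, (c i - c j))⁻¹ with hw
  set G : Fin (m+1) → PowerSeries ℚ := fun i => PowerSeries.mk (fun t => c i ^ t) with hG
  -- Step A : power series identity
  have hPS : ∑ i, PowerSeries.C (w i) *
      ∏ j ∈ Finset.univ.erase i, (1 - PowerSeries.C (c j) * PowerSeries.X)
      = PowerSeries.X ^ m := by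
    have h := congrArg (Polynomial.coeToPowerSeries.ringHom (R := ℚ)) (poly_identity c cinj c0)
    rw [map_sum, map_pow] at h
    convert h using 2 with i _
    · rw [map_mul, map_prod]
      congr 1
      · rw [Polynomial.coeToPowerSeries.ringHom_apply, Polynomial.coe_C]
      · apply Finset.prod_congr rfl
        intro j _
        rw [map_sub, map_one, map_mul, Polynomial.coeToPowerSeries.ringHom_apply,
          Polynomial.coeToPowerSeries.ringHom_apply, Polynomial.coe_C, Polynomial.coe_X]
    · rw [Polynomial.coeToPowerSeries.ringHom_apply, Polynomial.coe_X]
  -- Step B : multiply by ∏ G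
  have hB : ∑ i, PowerSeries.C (w i) * G i = PowerSeries.X ^ m * ∏ i, G i := by
    have expand : ∀ i : Fin (m+1),
        (PowerSeries.C (w i) *
            ∏ j ∈ Finset.univ.erase i, (1 - PowerSeries.C (c j) * PowerSeries.X)) *
          ∏ j, G j = PowerSeries.C (w i) * G i := by
      intro i
      conv_lhs => rw [← Finset.prod_erase_mul Finset.univ G (Finset.mem_univ i)]
      have hone : (∏ j ∈ Finset.univ.erase i, (1 - PowerSeries.C (c j) * PowerSeries.X)) *
          ∏ j ∈ Finset.univ.erase i, G j = 1 := by
        rw [← Finset.prod_mul_distrib]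
        exact Finset.prod_eq_one fun j _ => geom_mul (c j)
      calc (PowerSeries.C (w i) *
            ∏ j ∈ Finset.univ.erase i, (1 - PowerSeries.C (c j) * PowerSeries.X)) *
          ((∏ j ∈ Finset.univ.erase i, G j) * G i)
          = PowerSeries.C (w i) *
            (((∏ j ∈ Finset.univ.erase i, (1 - PowerSeries.C (c j) * PowerSeries.X)) *
              ∏ j ∈ Finset.univ.erase i, G j) * G i) := by ring
        _ = PowerSeries.C (w i) * G i := by rw [hone, one_mul]
    rw [← Finset.sum_congr rfl fun i _ => expand i, ← Finset.sum_mul, hPS]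
  -- Step C : take coefficient n
  have hcoeff := congrArg (PowerSeries.coeff n) hB
  rw [map_sum] at hcoeff
  have hL : ∀ i : Fin (m+1), PowerSeries.coeff n (PowerSeries.C (w i) * G i)
      = c i ^ n * w i := by
    intro i
    rw [PowerSeries.coeff_C_mul, hG, PowerSeries.coeff_mk, mul_comm]
  rw [Finset.sum_congr rfl fun i _ => hL i] at hcoeff
  rw [hcoeff, PowerSeries.coeff_X_pow_mul']
  by_cases hmn : m ≤ n
  · rw [if_pos hmn, if_pos hmn]
    rw [PowerSeries.coeff_prod]
    rw [Hf, Int.cast_sum]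
    rw [sum_finsuppAntidiag_eq Finset.univ (n - m)
      (fun k => ∏ i, PowerSeries.coeff (k i) (G i))]
    apply Finset.sum_congr rfl
    intro k _
    push_cast
    apply Finset.prod_congr rfl
    intro i _
    rw [hG, PowerSeries.coeff_mk]
  · rw [if_neg hmn, if_neg hmn]

lemma A_eq {m d : ℕ} (f : Polynomial ℤ) (hd : f.natDegree = d)
    (x : Fin (m+1) → ℤ) (hinj : Function.Injective x) (hpos : ∀ i, 1 ≤ x i) :
    ((∑ n ∈ Finset.Icc m d, f.coeff n * Hf x (n - m) : ℤ) : ℚ)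
      = ∑ i, ((f.eval (x i) : ℤ) : ℚ) *
          (∏ j ∈ Finset.univ.erase i, ((x i : ℚ) - (x j : ℚ)))⁻¹ := by
  have hev : ∀ i : Fin (m+1), ((f.eval (x i) : ℤ) : ℚ)
      = ∑ n ∈ Finset.range (d+1), (f.coeff n : ℚ) * (x i : ℚ) ^ n := by
    intro i
    rw [Polynomial.eval_eq_sum_range' (by omega : f.natDegree < d + 1)]
    push_cast
    ring_nf
    exact Finset.sum_congr rfl fun _ _ => mul_comm _ _
  calc ((∑ n ∈ Finset.Icc m d, f.coeff n * Hf x (n - m) : ℤ) : ℚ)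
      = ∑ n ∈ Finset.Icc m d, (f.coeff n : ℚ) * ((Hf x (n - m) : ℤ) : ℚ) := by push_cast; rfl
    _ = ∑ n ∈ Finset.range (d+1), (f.coeff n : ℚ) *
          (if m ≤ n then ((Hf x (n - m) : ℤ) : ℚ) else 0) := by
        simp_rw [mul_ite, mul_zero]
        rw [← Finset.sum_filter]
        apply Finset.sum_congr _ (fun _ _ => rfl)
        ext n
        simp only [Finset.mem_Icc, Finset.mem_filter, Finset.mem_range]
        omega
    _ = ∑ n ∈ Finset.range (d+1), (f.coeff n : ℚ) *
          ∑ i, (x i : ℚ) ^ n * (∏ j ∈ Finset.univ.erase i, ((x i : ℚ) - (x j : ℚ)))⁻¹ := by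
        refine Finset.sum_congr rfl fun n _ => ?_
        rw [key_identity x hinj hpos n]
    _ = ∑ i, ((f.eval (x i) : ℤ) : ℚ) *
          (∏ j ∈ Finset.univ.erase i, ((x i : ℚ) - (x j : ℚ)))⁻¹ := by
        simp_rw [Finset.mul_sum, hev, Finset.sum_mul]
        rw [Finset.sum_comm]
        apply Finset.sum_congr rfl fun i _ => Finset.sum_congr rfl fun n _ => by ring

theorem stmt_5 (f : Polynomial ℤ) (d : ℕ) (hd : f.natDegree = d) (hd2 : 2 ≤ d)
    (hroots : ∀ n : ℤ, f.eval n ≠ 0) (D : ℤ) (hD : D = d * |f.leadingCoeff| + 1) :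
    ∃ N₀ : ℕ, ∀ N : ℕ, N₀ ≤ N → ∀ p : ℕ, p.Prime → D * N < p →
      ∀ k : ℕ, 1 ≤ k → k ≤ d - 1 →
        ((Finset.Icc 1 N).filter fun n : ℕ => (p : ℤ) ^ k ∣ f.eval (n : ℤ)).card
          ≤ d - k := by
  classical
  set B : ℤ := ∑ n ∈ Finset.range (d+1), |f.coeff n| with hBdef
  have hf0 : f ≠ 0 := fun h => hroots 0 (by simp [h])
  have hlc : f.leadingCoeff = f.coeff d := by rw [Polynomial.leadingCoeff, hd]
  have hfd : 1 ≤ |f.coeff d| := by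
    have h := Polynomial.leadingCoeff_ne_zero.2 hf0
    rw [hlc] at h
    exact Int.one_le_abs (by simpa using h)
  have hcoeffB : ∀ n, n ≤ d → |f.coeff n| ≤ B := by
    intro n hn
    exact Finset.single_le_sum (f := fun t => |f.coeff t|) (fun t _ => abs_nonneg _)
      (Finset.mem_range.2 (by omega))
  have hB1 : 1 ≤ B := le_trans hfd (hcoeffB d le_rfl)
  have hdZ : (2:ℤ) ≤ (d:ℤ) := by exact_mod_cast hd2
  have hdpow : ∀ j : ℕ, (1:ℤ) ≤ (d:ℤ) ^ j := fun j => one_le_pow₀ (by linarith)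
  set T : ℤ := B * (d:ℤ)^d with hTdef
  have hT1 : 1 ≤ T := one_le_mul_of_one_le_of_one_le hB1 (hdpow d)
  have hTpow : 1 ≤ T ^ d := one_le_pow₀ hT1
  refine ⟨(B * T^d + T + 1).toNat, ?_⟩
  intro N hN p hp hpN k hk1 hkd
  have hNZ : B * T^d + T + 1 ≤ (N : ℤ) := Int.toNat_le.1 hN
  have hN1 : 1 ≤ (N:ℤ) := by nlinarith
  have hD1 : 1 ≤ D := by
    rw [hD]
    have := abs_nonneg f.leadingCoeff
    nlinarith
  have hNp : (N:ℤ) < (p:ℤ) := by nlinarith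
  by_contra hcon
  push_neg at hcon
  set m := d - k with hmdef
  have hm1d : m + 1 ≤ d := by omega
  have hkdm : d - m = k := by omega
  obtain ⟨s, hssub, hscard⟩ := Finset.exists_subset_card_eq
    (show m + 1 ≤ ((Finset.Icc 1 N).filter fun n : ℕ => (p : ℤ) ^ k ∣ f.eval (n : ℤ)).card by omega)
  set e := s.equivFinOfCardEq hscard with hedef
  set x : Fin (m+1) → ℤ := fun i => ((e.symm i : ℕ) : ℤ) with hxdef
  have hxinj : Function.Injective x := by
    intro a b hab
    have : (e.symm a : ℕ) = (e.symm b : ℕ) := Int.ofNat.inj hab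
    exact e.symm.injective (Subtype.ext this)
  have hxmem : ∀ i, ((e.symm i : ℕ)) ∈
      ((Finset.Icc 1 N).filter fun n : ℕ => (p : ℤ) ^ k ∣ f.eval (n : ℤ)) :=
    fun i => hssub (e.symm i).2
  have hx1 : ∀ i, 1 ≤ x i := by
    intro i
    have h := (Finset.mem_Icc.1 (Finset.mem_filter.1 (hxmem i)).1).1
    simp only [hxdef]
    exact_mod_cast h
  have hxN : ∀ i, x i ≤ (N:ℤ) := by
    intro i
    have h := (Finset.mem_Icc.1 (Finset.mem_filter.1 (hxmem i)).1).2
    simp only [hxdef]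
    exact_mod_cast h
  have hx0 : ∀ i, 0 ≤ x i := fun i => le_trans zero_le_one (hx1 i)
  have hdvdx : ∀ i, (p:ℤ)^k ∣ f.eval (x i) := fun i => (Finset.mem_filter.1 (hxmem i)).2
  set P : Fin (m+1) → ℤ := fun i => ∏ j ∈ Finset.univ.erase i, (x i - x j) with hPdef
  have hP0 : ∀ i, P i ≠ 0 := by
    intro i
    apply Finset.prod_ne_zero_iff.2
    intro j hj
    exact sub_ne_zero.2 fun h => (Finset.mem_erase.1 hj).1 (hxinj h).symm
  set W : ℤ := ∏ i, P i with hWdef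
  set A : ℤ := ∑ n ∈ Finset.Icc m d, f.coeff n * Hf x (n - m) with hAdef
  have hAQ : (A : ℚ) = ∑ i, ((f.eval (x i) : ℤ) : ℚ) * ((P i : ℤ) : ℚ)⁻¹ := by
    rw [hAdef, A_eq f hd x hxinj hx1]
    refine Finset.sum_congr rfl fun i _ => ?_
    congr 2
    rw [hPdef]
    push_cast
    rfl
  -- p does not divide W
  have hpP : ¬ (p:ℤ) ∣ W := by
    intro hdvd
    have hpp : Prime (p:ℤ) := Nat.prime_iff_prime_int.1 hp
    obtain ⟨i, -, hi⟩ := (Prime.dvd_finset_prod_iff hpp _).1 hdvd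
    obtain ⟨j, hj, hij⟩ := (Prime.dvd_finset_prod_iff hpp _).1 hi
    have h1 : x i - x j ≠ 0 := sub_ne_zero.2 fun h => (Finset.mem_erase.1 hj).1 (hxinj h).symm
    have h2 : (p:ℤ) ≤ |x i - x j| := Int.le_of_dvd (abs_pos.2 h1) ((dvd_abs _ _).2 hij)
    have h3 : |x i - x j| ≤ (N:ℤ) - 1 := by
      rw [abs_le]
      constructor <;> nlinarith [hx1 i, hx1 j, hxN i, hxN j]
    linarith
  -- p^k divides A
  have hAW : A * W = ∑ i, f.eval (x i) * ∏ i' ∈ Finset.univ.erase i, P i' := by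
    apply @Int.cast_injective ℚ _
    push_cast [hWdef]
    rw [hAQ, Finset.sum_mul]
    refine Finset.sum_congr rfl fun i _ => ?_
    have hsplit : (∏ i', ((P i' : ℤ):ℚ)) = ((P i : ℤ):ℚ) * ∏ i' ∈ Finset.univ.erase i, ((P i' : ℤ):ℚ) :=
      (Finset.mul_prod_erase Finset.univ _ (Finset.mem_univ i)).symm
    have hPiQ : ((P i : ℤ):ℚ) ≠ 0 := Int.cast_ne_zero.2 (hP0 i)
    calc ((f.eval (x i) : ℤ) : ℚ) * ((P i : ℤ) : ℚ)⁻¹ * ∏ i', ((P i' : ℤ):ℚ)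
        = ((f.eval (x i) : ℤ) : ℚ) * ((P i : ℤ) : ℚ)⁻¹ *
            (((P i : ℤ):ℚ) * ∏ i' ∈ Finset.univ.erase i, ((P i' : ℤ):ℚ)) := by rw [← hsplit]
      _ = ((f.eval (x i) : ℤ) : ℚ) * ∏ i' ∈ Finset.univ.erase i, ((P i' : ℤ):ℚ) := by
          field_simp
  have hdvdA : (p:ℤ)^k ∣ A := by
    have h1 : (p:ℤ)^k ∣ A * W := by
      rw [hAW]
      exact Finset.dvd_sum fun i _ => Dvd.dvd.mul_right (hdvdx i) _
    exact (((Nat.prime_iff_prime_int.1 hp).coprime_iff_not_dvd.2 hpP).pow_left).dvd_of_dvd_mul_right h1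
  -- the maximum point
  obtain ⟨i0, -, hi0⟩ := Finset.exists_max_image Finset.univ x ⟨0, Finset.mem_univ 0⟩
  set M : ℤ := x i0 with hMdef
  have hxM : ∀ i, x i ≤ M := fun i => hi0 i (Finset.mem_univ i)
  have hM1 : 1 ≤ M := hx1 i0
  have hMN : M ≤ (N:ℤ) := hxN i0
  -- a bound on |f.eval (x i)|
  have hfM : ∀ i, |f.eval (x i)| ≤ B * M ^ d := by
    intro i
    have heval : f.eval (x i) = ∑ n ∈ Finset.range (d+1), f.coeff n * x i ^ n := by
      rw [Polynomial.eval_eq_sum_range' (by omega : f.natDegree < d + 1)]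
    rw [heval]
    calc |∑ n ∈ Finset.range (d+1), f.coeff n * x i ^ n|
        ≤ ∑ n ∈ Finset.range (d+1), |f.coeff n * x i ^ n| := Finset.abs_sum_le_sum_abs _ _
      _ ≤ ∑ n ∈ Finset.range (d+1), |f.coeff n| * M ^ d := by
          apply Finset.sum_le_sum
          intro n hn
          have hn' := Finset.mem_range.1 hn
          rw [abs_mul, abs_pow, abs_of_nonneg (hx0 i)]
          apply mul_le_mul_of_nonneg_left _ (abs_nonneg _)
          calc x i ^ n ≤ M ^ n := pow_le_pow_left₀ (hx0 i) (hxM i) n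
            _ ≤ M ^ d := pow_le_pow_right₀ hM1 (by omega : n ≤ d)
      _ = B * M ^ d := by rw [← Finset.sum_mul]
  -- T < M
  have hMT : T < M := by
    by_contra hMT
    push_neg at hMT
    have h1 : (p:ℤ) ≤ |f.eval (x 0)| := by
      apply Int.le_of_dvd (abs_pos.2 (hroots _))
      exact (dvd_abs _ _).2 ((dvd_pow_self (p:ℤ) (by omega : k ≠ 0)).trans (hdvdx 0))
    have h2 : |f.eval (x 0)| ≤ B * T ^ d := by
      refine le_trans (hfM 0) ?_
      apply mul_le_mul_of_nonneg_left _ (by linarith)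
      exact pow_le_pow_left₀ (by linarith) hMT d
    nlinarith
  -- lower bound for |A| and A ≠ 0
  have hrest : |∑ n ∈ Finset.Icc m (d-1), f.coeff n * Hf x (n-m)|
      ≤ B * ((d:ℤ) * M)^(k-1) := by
    calc |∑ n ∈ Finset.Icc m (d-1), f.coeff n * Hf x (n-m)|
        ≤ ∑ n ∈ Finset.Icc m (d-1), |f.coeff n * Hf x (n-m)| := Finset.abs_sum_le_sum_abs _ _
      _ ≤ ∑ n ∈ Finset.Icc m (d-1), |f.coeff n| * ((d:ℤ) * M)^(k-1) := by
          apply Finset.sum_le_sum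
          intro n hn
          rw [abs_mul, abs_of_nonneg (Hf_nonneg x hx0 _)]
          apply mul_le_mul_of_nonneg_left _ (abs_nonneg _)
          have hnm : n - m ≤ k - 1 := by
            have := (Finset.mem_Icc.1 hn).2
            omega
          calc Hf x (n-m) ≤ (((m:ℤ)+1) * M) ^ (n-m) := by
                have := Hf_le x M hx0 hxM (n-m)
                exact_mod_cast this
            _ ≤ ((d:ℤ) * M) ^ (n-m) := by
                apply pow_le_pow_left₀ (by positivity)
                apply mul_le_mul_of_nonneg_right _ (by linarith)
                exact_mod_cast Nat.cast_le.2 (by omega : m + 1 ≤ d)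
            _ ≤ ((d:ℤ) * M) ^ (k-1) := by
                apply pow_le_pow_right₀ _ hnm
                nlinarith
      _ = (∑ n ∈ Finset.Icc m (d-1), |f.coeff n|) * ((d:ℤ) * M)^(k-1) := by
          rw [← Finset.sum_mul]
      _ ≤ B * ((d:ℤ) * M)^(k-1) := by
          apply mul_le_mul_of_nonneg_right _ (by positivity)
          apply Finset.sum_le_sum_of_subset_of_nonneg
          · intro n hn
            rw [Finset.mem_range]
            have := (Finset.mem_Icc.1 hn).2
            omega
          · intro n _ _
            exact abs_nonneg _
  have hAsplit : A = (∑ n ∈ Finset.Icc m (d-1), f.coeff n * Hf x (n-m)) + f.coeff d * Hf x k := by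
    rw [hAdef, ← Finset.sum_erase_add _ _ (Finset.mem_Icc.2 ⟨by omega, le_rfl⟩)]
    congr 1
    · apply Finset.sum_congr _ (fun _ _ => rfl)
      ext n
      simp only [Finset.mem_erase, Finset.mem_Icc]
      omega
    · rw [hkdm]
  have hHk : M ^ k ≤ Hf x k := Hf_ge x hx0 k i0
  have hMpow : (1:ℤ) ≤ M ^ (k-1) := one_le_pow₀ hM1
  have hMk : M ^ k = M * M ^ (k-1) := by
    rw [← pow_succ']
    congr 1
    omega
  have hTd : B * (d:ℤ)^(k-1) ≤ T := by
    rw [hTdef]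
    apply mul_le_mul_of_nonneg_left _ (by linarith)
    apply pow_le_pow_right₀ (by linarith) (by omega)
  have hA0 : A ≠ 0 := by
    intro h
    have h1 : |f.coeff d * Hf x k| ≤ |∑ n ∈ Finset.Icc m (d-1), f.coeff n * Hf x (n-m)| := by
      have := hAsplit
      rw [h] at this
      have h2 : f.coeff d * Hf x k = -(∑ n ∈ Finset.Icc m (d-1), f.coeff n * Hf x (n-m)) := by
        linarith
      rw [h2, abs_neg]
    have h3 : M ^ k ≤ |f.coeff d * Hf x k| := by
      rw [abs_mul, abs_of_nonneg (Hf_nonneg x hx0 _)]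
      calc M ^ k ≤ Hf x k := hHk
        _ ≤ |f.coeff d| * Hf x k := le_mul_of_one_le_left (Hf_nonneg x hx0 _) hfd
    have h4 : B * ((d:ℤ) * M)^(k-1) < M ^ k := by
      rw [mul_pow, hMk]
      calc B * ((d:ℤ)^(k-1) * M^(k-1)) = (B * (d:ℤ)^(k-1)) * M^(k-1) := by ring
        _ ≤ T * M^(k-1) := mul_le_mul_of_nonneg_right hTd (by positivity)
        _ < M * M^(k-1) := by
            apply mul_lt_mul_of_pos_right hMT (by positivity)
    linarith
  -- upper bound for |A|
  have hAup : |A| ≤ (|f.coeff d| * (d:ℤ)^k + 1) * (N:ℤ)^k := by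
    have h1 : |f.coeff d * Hf x k| ≤ |f.coeff d| * ((d:ℤ)^k * (N:ℤ)^k) := by
      rw [abs_mul, abs_of_nonneg (Hf_nonneg x hx0 _), ← mul_pow]
      apply mul_le_mul_of_nonneg_left _ (abs_nonneg _)
      calc Hf x k ≤ (((m:ℤ)+1) * (N:ℤ)) ^ k := by
            have := Hf_le x (N:ℤ) hx0 hxN k
            exact_mod_cast this
        _ ≤ ((d:ℤ) * N) ^ k := by
            apply pow_le_pow_left₀ (by positivity)
            apply mul_le_mul_of_nonneg_right _ (by linarith)
            exact_mod_cast Nat.cast_le.2 (by omega : m + 1 ≤ d)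
    have h2 : |∑ n ∈ Finset.Icc m (d-1), f.coeff n * Hf x (n-m)|
        ≤ B * ((d:ℤ)^(k-1) * (N:ℤ)^(k-1)) := by
      rw [← mul_pow]
      refine le_trans hrest ?_
      apply mul_le_mul_of_nonneg_left _ (by linarith)
      apply pow_le_pow_left₀ (by positivity)
      apply mul_le_mul_of_nonneg_left hMN (by linarith)
    have h3 : B * ((d:ℤ)^(k-1) * (N:ℤ)^(k-1)) ≤ (N:ℤ)^k := by
      have hNk : (N:ℤ)^k = (N:ℤ) * (N:ℤ)^(k-1) := by
        rw [← pow_succ']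
        congr 1
        omega
      rw [hNk]
      calc B * ((d:ℤ)^(k-1) * (N:ℤ)^(k-1)) = (B * (d:ℤ)^(k-1)) * (N:ℤ)^(k-1) := by ring
        _ ≤ (N:ℤ) * (N:ℤ)^(k-1) := by
            apply mul_le_mul_of_nonneg_right _ (by positivity)
            nlinarith
    calc |A| = |(∑ n ∈ Finset.Icc m (d-1), f.coeff n * Hf x (n-m)) + f.coeff d * Hf x k| := by
          rw [hAsplit]
      _ ≤ |∑ n ∈ Finset.Icc m (d-1), f.coeff n * Hf x (n-m)| + |f.coeff d * Hf x k| :=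
          abs_add_le _ _
      _ ≤ (N:ℤ)^k + |f.coeff d| * ((d:ℤ)^k * (N:ℤ)^k) := by linarith
      _ = (|f.coeff d| * (d:ℤ)^k + 1) * (N:ℤ)^k := by ring
  -- final comparison
  have hDk : (|f.coeff d| * (d:ℤ)^k + 1) ≤ D ^ k := by
    rw [hD, hlc]
    calc |f.coeff d| * (d:ℤ)^k + 1 ≤ ((d:ℤ) * |f.coeff d|)^k + 1^k := by
          rw [mul_pow, one_pow]
          have h5 : |f.coeff d| ≤ |f.coeff d| ^ k := le_self_pow₀ hfd (by omega)
          have h6 : (d:ℤ)^k * |f.coeff d| ≤ (d:ℤ)^k * |f.coeff d|^k :=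
            mul_le_mul_of_nonneg_left h5 (by positivity)
          linarith
      _ ≤ ((d:ℤ) * |f.coeff d| + 1)^k := pow_add_pow_le (by positivity) zero_le_one (by omega)
  have hpk : (D * N)^k < (p:ℤ)^k := by
    apply pow_lt_pow_left₀ hpN (by positivity) (by omega)
  have hfin : (p:ℤ)^k ≤ |A| := Int.le_of_dvd (abs_pos.2 hA0) ((dvd_abs _ _).2 hdvdA)
  have : (|f.coeff d| * (d:ℤ)^k + 1) * (N:ℤ)^k ≤ D^k * (N:ℤ)^k :=
    mul_le_mul_of_nonneg_right hDk (by positivity)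
  rw [mul_pow] at hpk
  linarith
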